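/- Under the condition N(η) ≠ (-1)^{nk}, every nonzero element of G(η,r), viewed as an F_q-linear endomorphism of F_{q^n}, has rank at least n-k+1; hence the twisted Gabidulin code G(η,r) is an MRD code of size q^{nk}. -/

import Mathlib

open Finset Polynomial

section Aux
variable {q n : ℕ} {F L : Type} [Field F] [Fintype F] [Field L] [Fintype L] [Algebra F L]

lemma charL_of (hq : IsPrimePow q) (hF : Fintype.card F = q) :
    ∃ p m : ℕ, p.Prime ∧ 0 < m ∧ q = p ^ m ∧ CharP L p := by
  obtain ⟨p, m, hp, hm, rfl⟩ := hq
  have hp' : p.Prime := hp.nat_prime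
  refine ⟨p, m, hp', hm, rfl, ?_⟩
  have hc : CharP F (ringChar F) := ringChar.charP F
  have hprime : (ringChar F).Prime := CharP.char_is_prime F (ringChar F)
  obtain ⟨d, hd, hcard⟩ := FiniteField.card F (ringChar F)
  have : ringChar F = p := by
    have h1 : ringChar F ∣ p ^ m := by
      rw [← hF, hcard]
      exact dvd_pow_self _ (by exact_mod_cast d.pos.ne')
    exact (Nat.prime_dvd_prime_iff_eq hprime hp').mp (hprime.dvd_of_dvd_pow h1)
  rw [← this]
  exact charP_of_injective_algebraMap (algebraMap F L).injective (ringChar F)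

set_option linter.unusedSectionVars false

lemma hpow_of (hq : IsPrimePow q) (hF : Fintype.card F = q) :
    ∀ x y : L, (x + y) ^ q = x ^ q + y ^ q := by
  obtain ⟨p, m, hp, hm, hq', hchar⟩ := charL_of (L := L) hq hF
  haveI := Fact.mk hp
  haveI := hchar
  intro x y
  rw [hq']
  exact add_pow_char_pow ..

lemma hfix_of (hF : Fintype.card F = q) :
    ∀ c : F, (algebraMap F L c) ^ q = algebraMap F L c := by
  intro c
  rw [← map_pow]
  congr 1
  rw [← hF]
  exact FiniteField.pow_card c

-- iterated versions
lemma hpow_iter (hpow : ∀ x y : L, (x + y) ^ q = x ^ q + y ^ q) (i : ℕ) :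
    ∀ x y : L, (x + y) ^ q ^ i = x ^ q ^ i + y ^ q ^ i := by
  induction i with
  | zero => simp
  | succ i ih =>
    intro x y
    rw [pow_succ, pow_mul, pow_mul, pow_mul, ih, hpow]

lemma hsub_iter (hpow : ∀ x y : L, (x + y) ^ q = x ^ q + y ^ q) (i : ℕ) :
    ∀ x y : L, (x - y) ^ q ^ i = x ^ q ^ i - y ^ q ^ i := by
  intro x y
  have := hpow_iter hpow i (x - y) y
  rw [sub_add_cancel] at this
  rw [this]; ring

lemma hfix_iter (hfix : ∀ c : F, (algebraMap F L c) ^ q = algebraMap F L c) (i : ℕ) :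
    ∀ c : F, (algebraMap F L c) ^ q ^ i = algebraMap F L c := by
  induction i with
  | zero => simp
  | succ i ih =>
    intro c
    rw [pow_succ, pow_mul, ih, hfix]

variable (q) in
/-- The `F`-linear map `x ↦ ∑_{i=0}^{k} b i * x^{q^i}`. -/
def qlin (hpow : ∀ x y : L, (x + y) ^ q = x ^ q + y ^ q)
    (hfix : ∀ c : F, (algebraMap F L c) ^ q = algebraMap F L c)
    (b : ℕ → L) (k : ℕ) : L →ₗ[F] L where
  toFun := fun x => ∑ i ∈ range (k + 1), b i * x ^ q ^ i
  map_add' := by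
    intro x y
    rw [← Finset.sum_add_distrib]
    refine Finset.sum_congr rfl fun i _ => ?_
    rw [hpow_iter hpow i, mul_add]
  map_smul' := by
    intro c x
    rw [RingHom.id_apply, Finset.smul_sum]
    show ∑ i ∈ range (k + 1), b i * (c • x) ^ q ^ i = _
    exact Finset.sum_congr rfl fun i _ => by
      rw [Algebra.smul_def, Algebra.smul_def, mul_pow, hfix_iter hfix i, mul_left_comm]

lemma qlin_apply (hpow : ∀ x y : L, (x + y) ^ q = x ^ q + y ^ q)
    (hfix : ∀ c : F, (algebraMap F L c) ^ q = algebraMap F L c)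
    (b : ℕ → L) (k : ℕ) (x : L) :
    qlin q hpow hfix b k x = ∑ i ∈ range (k + 1), b i * x ^ q ^ i := rfl

lemma finrank_ker_le (hq2 : 2 ≤ q) (hF : Fintype.card F = q)
    (hpow : ∀ x y : L, (x + y) ^ q = x ^ q + y ^ q)
    (hfix : ∀ c : F, (algebraMap F L c) ^ q = algebraMap F L c)
    (b : ℕ → L) (k m : ℕ) (hmk : m ≤ k) (hbm : b m ≠ 0) (hhigh : ∀ i, m < i → b i = 0) :
    Module.finrank F (LinearMap.ker (qlin q hpow hfix b k)) ≤ m := by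
  classical
  set f := qlin q hpow hfix b k with hf
  set P : Polynomial L := ∑ i ∈ range (m + 1), Polynomial.C (b i) * Polynomial.X ^ (q ^ i) with hP
  have hq1 : 1 < q := hq2
  have hqpow_inj : Function.Injective (fun i : ℕ => q ^ i) := Nat.pow_right_injective hq2
  have heval : ∀ x : L, P.eval x = f x := by
    intro x
    rw [hP, Polynomial.eval_finset_sum, qlin_apply]
    simp only [Polynomial.eval_mul, Polynomial.eval_C, Polynomial.eval_pow, Polynomial.eval_X]
    refine Finset.sum_subset (Finset.range_subset_range.mpr (by omega)) ?_
    intro i _ hi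
    have : b i = 0 := hhigh i (by simp only [Finset.mem_range] at hi ⊢; omega)
    simp [this]
  have hcoeff : P.coeff (q ^ m) = b m := by
    rw [hP, Polynomial.finset_sum_coeff]
    rw [Finset.sum_eq_single m]
    · simp [Polynomial.coeff_C_mul, Polynomial.coeff_X_pow]
    · intro i _ hi
      rw [Polynomial.coeff_C_mul, Polynomial.coeff_X_pow, if_neg, mul_zero]
      exact fun h => hi (hqpow_inj h.symm)
    · intro h; exact absurd (Finset.self_mem_range_succ m) h
  have hP0 : P ≠ 0 := fun h => hbm (by rw [← hcoeff, h, Polynomial.coeff_zero])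
  have hdeg : P.natDegree ≤ q ^ m := by
    rw [hP]
    refine Polynomial.natDegree_sum_le_of_forall_le _ _ fun i hi => ?_
    refine (Polynomial.natDegree_C_mul_le _ _).trans ?_
    refine (Polynomial.natDegree_X_pow_le _).trans ?_
    exact Nat.pow_le_pow_right (by omega) (by simp only [Finset.mem_range] at hi; omega)
  letI : Fintype ↥(LinearMap.ker f) := Fintype.ofFinite _
  have hcard : Fintype.card ↥(LinearMap.ker f) ≤ q ^ m := by
    have hinj : Function.Injective
        (fun x : ↥(LinearMap.ker f) => (⟨x.val, by
          rw [Multiset.mem_toFinset, Polynomial.mem_roots hP0]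
          exact (by rw [Polynomial.IsRoot, heval, LinearMap.mem_ker.mp x.2] : P.IsRoot x.val)⟩ :
          {y // y ∈ P.roots.toFinset})) := by
      intro x y h
      rw [Subtype.ext_iff] at h
      exact Subtype.ext h
    calc Fintype.card ↥(LinearMap.ker f) ≤ Fintype.card {y // y ∈ P.roots.toFinset} :=
          Fintype.card_le_of_injective _ hinj
      _ = P.roots.toFinset.card := Fintype.card_coe _
      _ ≤ Multiset.card P.roots := Multiset.toFinset_card_le _
      _ ≤ P.natDegree := Polynomial.card_roots' P
      _ ≤ q ^ m := hdeg
  have hcard2 : Fintype.card ↥(LinearMap.ker f) =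
      q ^ Module.finrank F ↥(LinearMap.ker f) := by
    rw [← hF]; exact Module.card_eq_pow_finrank
  rw [hcard2] at hcard
  exact (Nat.pow_le_pow_iff_right hq1).mp hcard

variable (q) in
/-- Downward-recursive division coefficients. -/
def dcoef (b : ℕ → L) (α : L) (k : ℕ) : ℕ → L
  | 0 => b (k + 1)
  | (i + 1) => b (k - i) + dcoef b α k i * α ^ q ^ (k - i)

lemma hco_top (b : ℕ → L) (α : L) (k : ℕ) :
    (fun j => dcoef q b α k (k - j)) k = b (k + 1) := by
  simp [Nat.sub_self, dcoef]

lemma hco_step (b : ℕ → L) (α : L) (k : ℕ) (j : ℕ) (hj : j < k) :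
    (fun j => dcoef q b α k (k - j)) j
      = b (j + 1) + (fun j => dcoef q b α k (k - j)) (j + 1) * α ^ q ^ (j + 1) := by
  simp only []
  have h1 : k - j = (k - (j + 1)) + 1 := by omega
  have h2 : k - (k - (j + 1)) = j + 1 := by omega
  rw [h1, dcoef, h2]

lemma qlin_decomp (hpow : ∀ x y : L, (x + y) ^ q = x ^ q + y ^ q)
    (hfix : ∀ c : F, (algebraMap F L c) ^ q = algebraMap F L c)
    (b h : ℕ → L) (k : ℕ) (α x : L)
    (htop : h k = b (k + 1))
    (hstep : ∀ j, j < k → h j = b (j + 1) + h (j + 1) * α ^ q ^ (j + 1)) :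
    qlin q hpow hfix h k (x ^ q - α * x)
      = qlin q hpow hfix b (k + 1) x - (b 0 + h 0 * α) * x := by
  rw [qlin_apply, qlin_apply]
  have e1 : ∀ j : ℕ, (x ^ q - α * x) ^ q ^ j = x ^ q ^ (j + 1) - α ^ q ^ j * x ^ q ^ j := by
    intro j
    rw [hsub_iter hpow, mul_pow, ← pow_mul, ← pow_succ']
  have hA : ∑ j ∈ range (k + 1), h j * x ^ q ^ (j + 1)
      = ∑ j ∈ range k, b (j + 1) * x ^ q ^ (j + 1)
        + ∑ j ∈ range k, h (j + 1) * (α ^ q ^ (j + 1) * x ^ q ^ (j + 1))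
        + b (k + 1) * x ^ q ^ (k + 1) := by
    rw [Finset.sum_range_succ, htop, ← Finset.sum_add_distrib]
    congr 1
    refine Finset.sum_congr rfl fun j hj => ?_
    rw [hstep j (Finset.mem_range.mp hj)]; ring
  have hB : ∑ j ∈ range (k + 1), h j * (α ^ q ^ j * x ^ q ^ j)
      = ∑ j ∈ range k, h (j + 1) * (α ^ q ^ (j + 1) * x ^ q ^ (j + 1))
        + h 0 * (α ^ q ^ 0 * x ^ q ^ 0) := Finset.sum_range_succ' _ _
  have hb1 : ∑ i ∈ range (k + 1 + 1), b i * x ^ q ^ i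
      = ∑ j ∈ range (k + 1), b (j + 1) * x ^ q ^ (j + 1) + b 0 * x ^ q ^ 0 :=
    Finset.sum_range_succ' _ _
  have hb2 : ∑ j ∈ range (k + 1), b (j + 1) * x ^ q ^ (j + 1)
      = ∑ j ∈ range k, b (j + 1) * x ^ q ^ (j + 1) + b (k + 1) * x ^ q ^ (k + 1) :=
    Finset.sum_range_succ _ _
  calc ∑ j ∈ range (k + 1), h j * (x ^ q - α * x) ^ q ^ j
      = ∑ j ∈ range (k + 1), (h j * x ^ q ^ (j + 1) - h j * (α ^ q ^ j * x ^ q ^ j)) := by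
        refine Finset.sum_congr rfl fun j _ => ?_
        rw [e1 j]; ring
    _ = ∑ j ∈ range (k + 1), h j * x ^ q ^ (j + 1)
        - ∑ j ∈ range (k + 1), h j * (α ^ q ^ j * x ^ q ^ j) := (Finset.sum_sub_distrib _ _)
    _ = _ := by
        rw [hA, hB, hb1, hb2]
        simp only [pow_zero, pow_one]
        ring

lemma geom_eq (hq2 : 2 ≤ q) : (q ^ n - 1) / (q - 1) = ∑ i ∈ range n, q ^ i := by
  have hz : ((∑ i ∈ range n, q ^ i : ℕ) : ℤ) * ((q : ℤ) - 1) = (q : ℤ) ^ n - 1 := by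
    push_cast
    exact geom_sum_mul (q : ℤ) n
  have hmul : (∑ i ∈ range n, q ^ i) * (q - 1) = q ^ n - 1 := by
    have h1 : ((q - 1 : ℕ) : ℤ) = (q : ℤ) - 1 := by
      have : 1 ≤ q := by omega
      push_cast [this]; ring
    have h2 : ((q ^ n - 1 : ℕ) : ℤ) = (q : ℤ) ^ n - 1 := by
      have : 1 ≤ q ^ n := Nat.one_le_pow _ _ (by omega)
      push_cast [this]; ring
    have := hz
    rw [← h1, ← h2] at this
    exact_mod_cast this
  rw [← hmul, Nat.mul_div_cancel _ (by omega : 0 < q - 1)]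

lemma neg_one_pow_e (hq : IsPrimePow q) (hF : Fintype.card F = q) (hL : Fintype.card L = q ^ n) :
    (-1 : L) ^ ((q ^ n - 1) / (q - 1)) = (-1 : L) ^ n := by
  by_cases h2 : (-1 : L) = 1
  · rw [h2, one_pow, one_pow]
  · obtain ⟨p, m, hp, hm, hq', hchar⟩ := charL_of (L := L) hq hF
    have hp2 : p ≠ 2 := by
      rintro rfl
      haveI := hchar
      haveI : Fact (Nat.Prime 2) := ⟨Nat.prime_two⟩
      exact h2 (CharTwo.neg_eq (1 : L))
    have hqodd : Odd q := by
      rw [hq']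
      exact (hp.odd_of_ne_two hp2).pow
    rw [geom_eq hq.two_le (n := n)]
    have hqm : q % 2 = 1 := Nat.odd_iff.mp hqodd
    have hpar : (∑ i ∈ range n, q ^ i) % 2 = n % 2 := by
      rw [Finset.sum_nat_mod]
      have : ∀ i ∈ range n, q ^ i % 2 = 1 % 2 := by
        intro i _
        rw [Nat.pow_mod, hqm, one_pow]
      rw [Finset.sum_congr rfl this]
      simp [Nat.mod_mod_of_dvd]
    rcases Nat.even_or_odd n with he | ho
    · have hes : Even (∑ i ∈ range n, q ^ i) := by
        rw [Nat.even_iff, hpar, ← Nat.even_iff]; exact he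
      rw [he.neg_one_pow, hes.neg_one_pow]
    · have hos : Odd (∑ i ∈ range n, q ^ i) := by
        rw [Nat.odd_iff, hpar, ← Nat.odd_iff]; exact ho
      rw [ho.neg_one_pow, hos.neg_one_pow]

lemma pow_qn_sub_one (hq2 : 2 ≤ q) (hL : Fintype.card L = q ^ n) (x : L) (hx : x ≠ 0) :
    x ^ (q ^ n - 1) = 1 := by
  rw [← hL]
  exact FiniteField.pow_card_sub_one_eq_one x hx

/-- The "norm" x^e lies in the fixed field of the q-power map. -/
lemma efix (hq2 : 2 ≤ q) (hL : Fintype.card L = q ^ n) (x : L) (hx : x ≠ 0) :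
    ∀ r : ℕ, (x ^ ((q ^ n - 1) / (q - 1))) ^ q ^ r = x ^ ((q ^ n - 1) / (q - 1)) := by
  have hdvd : (q - 1) * ((q ^ n - 1) / (q - 1)) = q ^ n - 1 := by
    rw [Nat.mul_div_cancel' ]
    have := Nat.sub_dvd_pow_sub_pow q 1 n
    simpa using this
  have base : (x ^ ((q ^ n - 1) / (q - 1))) ^ q = x ^ ((q ^ n - 1) / (q - 1)) := by
    have h1 : (x ^ ((q ^ n - 1) / (q - 1))) ^ (q - 1) = 1 := by
      rw [← pow_mul, mul_comm ((q ^ n - 1) / (q - 1)), hdvd]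
      exact pow_qn_sub_one hq2 hL x hx
    calc (x ^ ((q ^ n - 1) / (q - 1))) ^ q
        = (x ^ ((q ^ n - 1) / (q - 1))) ^ (q - 1 + 1) := by congr 1; omega
      _ = x ^ ((q ^ n - 1) / (q - 1)) := by rw [pow_succ, h1, one_mul]
  intro r
  induction r with
  | zero => simp
  | succ r ih => rw [pow_succ, pow_mul, ih, base]

lemma gow_quinlan (hq : IsPrimePow q) (hF : Fintype.card F = q) (hL : Fintype.card L = q ^ n)
    (hpow : ∀ x y : L, (x + y) ^ q = x ^ q + y ^ q)
    (hfix : ∀ c : F, (algebraMap F L c) ^ q = algebraMap F L c) :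
    ∀ (k : ℕ) (b : ℕ → L), b k ≠ 0 →
      k ≤ Module.finrank F (LinearMap.ker (qlin q hpow hfix b k)) →
      b 0 ^ ((q ^ n - 1) / (q - 1)) = (-1) ^ (n * k) * b k ^ ((q ^ n - 1) / (q - 1)) := by
  intro k
  induction k with
  | zero => intro b _ _; simp
  | succ k ih =>
    intro b hbk hker
    set e := (q ^ n - 1) / (q - 1) with he
    set f := qlin q hpow hfix b (k + 1) with hf
    -- find a nonzero kernel element
    have hkerne : LinearMap.ker f ≠ ⊥ := by
      intro hbot
      rw [hbot] at hker
      simp at hker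
    obtain ⟨u, hu, hu0⟩ := Submodule.exists_mem_ne_zero_of_ne_bot hkerne
    set α : L := u ^ (q - 1) with hα
    set h : ℕ → L := fun j => dcoef q b α k (k - j) with hh
    have htop : h k = b (k + 1) := hco_top b α k
    have hstep : ∀ j, j < k → h j = b (j + 1) + h (j + 1) * α ^ q ^ (j + 1) :=
      fun j hj => hco_step b α k j hj
    have hdec : ∀ x : L, qlin q hpow hfix h k (x ^ q - α * x)
        = f x - (b 0 + h 0 * α) * x :=
      fun x => qlin_decomp hpow hfix b h k α x htop hstep
    -- the degree-one polynomial g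
    set gb : ℕ → L := fun i => if i = 0 then -α else if i = 1 then 1 else 0 with hgb
    set g := qlin q hpow hfix gb 1 with hg
    have hgapp : ∀ x : L, g x = x ^ q - α * x := by
      intro x
      rw [hg, qlin_apply]
      rw [Finset.sum_range_succ, Finset.sum_range_one]
      simp [hgb]
      ring
    have hαu : α * u = u ^ q := by
      rw [hα, ← pow_succ]
      congr 1
      have := hq.two_le
      omega
    have hgu : g u = 0 := by rw [hgapp, hαu]; ring
    have hfu : f u = 0 := LinearMap.mem_ker.mp hu
    -- b 0 = -(h 0 * α)
    have hb0 : b 0 + h 0 * α = 0 := by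
      have := hdec u
      rw [← hgapp, hgu, map_zero, hfu, zero_sub] at this
      have h2 : (b 0 + h 0 * α) * u = 0 := by
        have := this.symm
        rwa [neg_eq_zero] at this
      rcases mul_eq_zero.mp h2 with h3 | h3
      · exact h3
      · exact absurd h3 hu0
    -- kernel of H has finrank ≥ k
    set H := qlin q hpow hfix h k with hH
    have hkerH : k ≤ Module.finrank F (LinearMap.ker H) := by
      set φ : ↥(LinearMap.ker f) →ₗ[F] L := g ∘ₗ (LinearMap.ker f).subtype with hφ
      have hrange : LinearMap.range φ ≤ LinearMap.ker H := by
        rintro y ⟨x, rfl⟩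
        rw [LinearMap.mem_ker]
        have hx : f x.val = 0 := LinearMap.mem_ker.mp x.2
        have : φ x = (x.val) ^ q - α * x.val := by
          rw [hφ]; exact hgapp x.val
        rw [this, hdec, hx, hb0, zero_mul, sub_zero]
      have hkerφ : Module.finrank F ↥(LinearMap.ker φ) ≤ 1 := by
        have hgk : Module.finrank F ↥(LinearMap.ker g) ≤ 1 := by
          rw [hg]
          refine finrank_ker_le hq.two_le hF hpow hfix gb 1 1 le_rfl (by simp [hgb]) ?_
          intro i hi
          simp only [hgb]
          rw [if_neg (by omega), if_neg (by omega)]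
        have hψ : ∃ ψ : ↥(LinearMap.ker φ) →ₗ[F] ↥(LinearMap.ker g), Function.Injective ψ := by
          refine ⟨LinearMap.codRestrict (LinearMap.ker g)
            ((LinearMap.ker f).subtype ∘ₗ (LinearMap.ker φ).subtype) ?_, ?_⟩
          · intro y
            have hy : φ y.val = 0 := LinearMap.mem_ker.mp y.2
            exact LinearMap.mem_ker.mpr hy
          · intro a b hab
            have : (a.val.val : L) = b.val.val := by
              have := congrArg Subtype.val hab
              exact this
            exact Subtype.ext (Subtype.ext this)
        obtain ⟨ψ, hψinj⟩ := hψ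
        exact (LinearMap.finrank_le_finrank_of_injective hψinj).trans hgk
      have hrn : Module.finrank F (LinearMap.range φ)
          + Module.finrank F (LinearMap.ker φ) = Module.finrank F ↥(LinearMap.ker f) :=
        LinearMap.finrank_range_add_finrank_ker φ
      have h1 : k ≤ Module.finrank F (LinearMap.range φ) := by omega
      exact h1.trans (Submodule.finrank_mono hrange)
    -- apply the induction hypothesis
    have hIH := ih h (htop ▸ hbk) hkerH
    rw [htop] at hIH
    -- conclude
    have hb0' : b 0 = -(h 0 * α) := by linear_combination hb0
    have hαe : α ^ e = 1 := by
      rw [hα, ← pow_mul]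
      have hdvd : (q - 1) * e = q ^ n - 1 := by
        rw [he, Nat.mul_div_cancel']
        have := Nat.sub_dvd_pow_sub_pow q 1 n
        simpa using this
      rw [hdvd]
      exact pow_qn_sub_one hq.two_le hL u hu0
    have hnege : (-1 : L) ^ e = (-1 : L) ^ n := neg_one_pow_e hq hF hL
    calc b 0 ^ e = (-(h 0 * α)) ^ e := by rw [hb0']
      _ = (-1) ^ e * (h 0 ^ e * α ^ e) := by rw [neg_eq_neg_one_mul, mul_pow, mul_pow]
      _ = (-1) ^ n * (h 0 ^ e) := by rw [hnege, hαe, mul_one]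
      _ = (-1) ^ n * ((-1) ^ (n * k) * b (k + 1) ^ e) := by rw [hIH]
      _ = (-1) ^ (n * (k + 1)) * b (k + 1) ^ e := by
          rw [← mul_assoc, ← pow_add]
          congr 2
          ring

end Aux

/-- Under N(η) ≠ (-1)^{nk}, every nonzero element of G(η,r), viewed
as an F_q-linear endomorphism of F_{q^n}, has rank at least n-k+1; hence the
twisted Gabidulin code G(η,r) is MRD of size q^{nk}. -/
theorem stmt_9 (q n : ℕ) (hq : IsPrimePow q) (hn : 0 < n)
    (F L : Type) [Field F] [Fintype F] [Field L] [Fintype L] [Algebra F L]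
    (hF : Fintype.card F = q) (hL : Fintype.card L = q ^ n)
    (k r : ℕ) (hk : 0 < k) (hkn : k < n) (η : L)
    (hη : η ^ ((q ^ n - 1) / (q - 1)) ≠ (-1) ^ (n * k)) :
    (∀ c : Fin k → L, c ≠ 0 →
      n - k + 1 ≤ Module.finrank F (Submodule.span F (Set.range
        (fun a : L => (∑ i : Fin k, c i * a ^ q ^ (i : ℕ))
          + η * (c ⟨0, hk⟩) ^ q ^ r * a ^ q ^ k)))) ∧
    Nat.card {g : L → L // ∃ c : Fin k → L,
      g = fun a : L => (∑ i : Fin k, c i * a ^ q ^ (i : ℕ))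
        + η * (c ⟨0, hk⟩) ^ q ^ r * a ^ q ^ k} = q ^ (n * k) := by
  classical
  have hpow : ∀ x y : L, (x + y) ^ q = x ^ q + y ^ q := hpow_of hq hF
  have hfix : ∀ c : F, (algebraMap F L c) ^ q = algebraMap F L c := hfix_of hF
  have hq2 : 2 ≤ q := hq.two_le
  have hdim : Module.finrank F L = n := by
    have hc : Fintype.card L = Fintype.card F ^ Module.finrank F L := Module.card_eq_pow_finrank
    rw [hF, hL] at hc
    exact (Nat.pow_right_injective hq2 hc.symm)
  set e := (q ^ n - 1) / (q - 1) with he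
  -- coefficient vector
  set bc : (Fin k → L) → ℕ → L := fun c i =>
    if h : i < k then c ⟨i, h⟩ else if i = k then η * (c ⟨0, hk⟩) ^ q ^ r else 0 with hbc
  have hfun : ∀ c : Fin k → L,
      (fun a : L => (∑ i : Fin k, c i * a ^ q ^ (i : ℕ))
        + η * (c ⟨0, hk⟩) ^ q ^ r * a ^ q ^ k) = ⇑(qlin q hpow hfix (bc c) k) := by
    intro c
    funext a
    rw [qlin_apply, Finset.sum_range_succ]
    congr 1
    · rw [← Fin.sum_univ_eq_sum_range (fun i => bc c i * a ^ q ^ i) k]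
      refine Finset.sum_congr rfl fun i _ => ?_
      congr 1
      simp only [hbc, dif_pos i.isLt]
    · simp [hbc]
  -- part 1
  have part1 : ∀ c : Fin k → L, c ≠ 0 →
      n - k + 1 ≤ Module.finrank F (Submodule.span F (Set.range
        (fun a : L => (∑ i : Fin k, c i * a ^ q ^ (i : ℕ))
          + η * (c ⟨0, hk⟩) ^ q ^ r * a ^ q ^ k))) := by
    intro c hc
    rw [hfun c]
    set f := qlin q hpow hfix (bc c) k with hf
    rw [← LinearMap.coe_range, Submodule.span_eq]
    have hrn : Module.finrank F (LinearMap.range f)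
        + Module.finrank F (LinearMap.ker f) = n := by
      rw [← hdim]; exact LinearMap.finrank_range_add_finrank_ker f
    have hker_le : Module.finrank F (LinearMap.ker f) ≤ k - 1 := by
      rcases eq_or_ne (bc c k) 0 with h0 | h0
      · -- top coefficient zero: degree drops
        obtain ⟨j, hj⟩ : ∃ j : Fin k, c j ≠ 0 := by
          by_contra hall
          push_neg at hall
          exact hc (funext hall)
        set s := (Finset.range (k + 1)).filter (fun i => bc c i ≠ 0) with hs
        have hsne : s.Nonempty := by
          refine ⟨j.val, ?_⟩
          rw [hs, Finset.mem_filter]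
          refine ⟨Finset.mem_range.mpr (by omega), ?_⟩
          simp only [hbc, dif_pos j.isLt]
          simpa using hj
        set m := s.max' hsne with hm
        have hmmem : m ∈ s := s.max'_mem hsne
        rw [hs, Finset.mem_filter, Finset.mem_range] at hmmem
        have hmk : m ≤ k := by omega
        have hbm : bc c m ≠ 0 := hmmem.2
        have hmk' : m ≠ k := fun hh => hbm (hh ▸ h0)
        have hhigh : ∀ i, m < i → bc c i = 0 := by
          intro i hi
          by_cases hik : i ≤ k
          · by_contra hbi
            have : i ∈ s := by
              rw [hs, Finset.mem_filter, Finset.mem_range]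
              exact ⟨by omega, hbi⟩
            have := s.le_max' i this
            omega
          · simp only [hbc]
            rw [dif_neg (by omega), if_neg (by omega)]
        have hle := finrank_ker_le hq2 hF hpow hfix (bc c) k m hmk hbm hhigh
        rw [← hf] at hle
        omega
      · -- top coefficient nonzero: Gow-Quinlan
        by_contra hcon
        push_neg at hcon
        have hk' : k ≤ Module.finrank F (LinearMap.ker f) := by omega
        have hgq := gow_quinlan hq hF hL hpow hfix k (bc c) h0 hk'
        rw [← he] at hgq
        have hb0 : bc c 0 = c ⟨0, hk⟩ := by simp only [hbc, dif_pos hk]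
        have hbk : bc c k = η * (c ⟨0, hk⟩) ^ q ^ r := by
          simp [hbc]
        rw [hb0, hbk] at hgq
        set c0 := c ⟨0, hk⟩ with hc0
        have hc00 : c0 ≠ 0 := by
          intro hz
          apply h0
          rw [hbk, hz, zero_pow (by positivity : q ^ r ≠ 0), mul_zero]
        have hN : (c0 ^ e) ^ q ^ r = c0 ^ e := efix hq2 hL c0 hc00 r
        have hNe : c0 ^ e ≠ 0 := pow_ne_zero _ hc00
        -- c0^e = (-1)^(nk) * η^e * (c0^{q^r})^e
        have hswap : (c0 ^ q ^ r) ^ e = c0 ^ e := by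
          rw [← pow_mul, mul_comm, pow_mul, hN]
        rw [mul_pow, hswap] at hgq
        have hres : (1 : L) = (-1) ^ (n * k) * η ^ e := by
          have hmm : (1 : L) * c0 ^ e = ((-1) ^ (n * k) * η ^ e) * c0 ^ e := by
            rw [one_mul]
            nth_rewrite 1 [hgq]
            ring
          exact mul_right_cancel₀ hNe hmm
        apply hη
        have hsq : ((-1 : L) ^ (n * k)) * ((-1 : L) ^ (n * k)) = 1 := by
          rw [← pow_add, Even.neg_one_pow ⟨n * k, rfl⟩]
        calc η ^ e = ((-1 : L) ^ (n * k) * (-1 : L) ^ (n * k)) * η ^ e := by rw [hsq, one_mul]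
          _ = (-1 : L) ^ (n * k) * ((-1 : L) ^ (n * k) * η ^ e) := by ring
          _ = (-1 : L) ^ (n * k) := by rw [← hres, mul_one]
    omega
  refine ⟨part1, ?_⟩
  -- part 2
  set Φ : (Fin k → L) → (L → L) := fun c => fun a : L =>
    (∑ i : Fin k, c i * a ^ q ^ (i : ℕ)) + η * (c ⟨0, hk⟩) ^ q ^ r * a ^ q ^ k with hΦ
  have hinj : Function.Injective Φ := by
    intro c c' hcc
    by_contra hne
    have hd : c - c' ≠ 0 := sub_ne_zero.mpr hne
    have hzero : (fun a : L => (∑ i : Fin k, (c - c') i * a ^ q ^ (i : ℕ))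
        + η * ((c - c') ⟨0, hk⟩) ^ q ^ r * a ^ q ^ k) = fun _ => (0 : L) := by
      funext a
      have hca : Φ c a = Φ c' a := congrFun hcc a
      simp only [hΦ] at hca
      simp only [Pi.sub_apply]
      rw [hsub_iter hpow r]
      have hsum : ∑ i : Fin k, (c i - c' i) * a ^ q ^ (i : ℕ)
          = (∑ i : Fin k, c i * a ^ q ^ (i : ℕ)) - ∑ i : Fin k, c' i * a ^ q ^ (i : ℕ) := by
        rw [← Finset.sum_sub_distrib]
        exact Finset.sum_congr rfl fun i _ => by ring
      rw [hsum]
      linear_combination hca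
    have := part1 (c - c') hd
    rw [hzero] at this
    have hrange : Set.range (fun _ : L => (0 : L)) = {0} := Set.range_const
    rw [hrange] at this
    rw [Submodule.span_zero_singleton] at this
    rw [finrank_bot] at this
    omega
  have hequiv : {g : L → L // ∃ c : Fin k → L,
      g = fun a : L => (∑ i : Fin k, c i * a ^ q ^ (i : ℕ))
        + η * (c ⟨0, hk⟩) ^ q ^ r * a ^ q ^ k} ≃ Set.range Φ := by
    refine Equiv.subtypeEquivRight fun g => ?_
    simp only [Set.mem_range, hΦ]
    exact ⟨fun ⟨c, hc⟩ => ⟨c, hc.symm⟩, fun ⟨c, hc⟩ => ⟨c, hc.symm⟩⟩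
  rw [Nat.card_congr hequiv, Nat.card_congr (Equiv.ofInjective Φ hinj).symm]
  rw [Nat.card_eq_fintype_card, Fintype.card_fun]
  rw [hL, Fintype.card_fin, ← pow_mul]
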